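/- Let I = P_{F_1} ⋯ P_{F_r} be a transversal polymatroidal ideal. If P_A and P_B are associated primes of S/I with A ∩ B ≠ ∅, then P_{A ∪ B} is also an associated prime of S/I. -/

import Mathlib

open MvPolynomial

/-- The monomial prime ideal `P_F = (x_i : i ∈ F)`. -/
noncomputable def PF {K : Type} [Field K] {n : ℕ} (F : Finset (Fin n)) :
    Ideal (MvPolynomial (Fin n) K) :=
  Ideal.span ((fun i => (X i : MvPolynomial (Fin n) K)) '' ↑F)

namespace Stmt12

variable {K : Type} [Field K] {n r : ℕ}

/-- exponent of a generator picked by `c` over the index set `s`. -/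
noncomputable def genE (s : Finset (Fin r)) (c : Fin r → Fin n) : Fin n →₀ ℕ :=
  ∑ i ∈ s, Finsupp.single (c i) 1

lemma X_eq {K : Type} [CommSemiring K] {n : ℕ} (k : Fin n) :
    (X k : MvPolynomial (Fin n) K) = monomial (Finsupp.single k 1) 1 := by
  rw [← pow_one (X k), X_pow_eq_monomial]

lemma genE_apply (s : Finset (Fin r)) (c : Fin r → Fin n) (j : Fin n) :
    genE s c j = ∑ i ∈ s, (if c i = j then 1 else 0) := by
  classical
  rw [genE, Finsupp.finset_sum_apply]
  exact Finset.sum_congr rfl (fun i _ => by rw [Finsupp.single_apply])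

lemma genE_le_card (s : Finset (Fin r)) (c : Fin r → Fin n) (j : Fin n) :
    genE s c j ≤ s.card := by
  classical
  rw [genE_apply]
  calc ∑ i ∈ s, (if c i = j then 1 else 0) ≤ ∑ _i ∈ s, 1 := by
        apply Finset.sum_le_sum; intro i _; split <;> omega
    _ = s.card := by simp

/-- The set of exponents of the generators of `∏_{i∈s} P_{F i}`. -/
def ESet (F : Fin r → Finset (Fin n)) (s : Finset (Fin r)) : Set (Fin n →₀ ℕ) :=
  {e | ∃ c : Fin r → Fin n, (∀ i ∈ s, c i ∈ F i) ∧ e = genE s c}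

theorem prod_PF_eq (F : Fin r → Finset (Fin n)) (hF : ∀ i, (F i).Nonempty)
    (s : Finset (Fin r)) :
    (∏ i ∈ s, PF (K := K) (F i)) =
      Ideal.span ((fun e => monomial e (1 : K)) '' ESet F s) := by
  classical
  induction s using Finset.induction_on with
  | empty =>
      have h1 : ESet F (∅ : Finset (Fin r)) = {0} := by
        ext e
        constructor
        · rintro ⟨c, _, rfl⟩
          simp [genE]
        · rintro rfl
          exact ⟨fun i => (hF i).choose, by simp, by simp [genE]⟩
      rw [Finset.prod_empty, h1]
      simp [Ideal.one_eq_top, Ideal.span_singleton_one]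
  | insert _ _ ha ih =>
      rename_i a s
      rw [Finset.prod_insert ha, ih, PF, Ideal.span_mul_span']
      congr 1
      ext p
      constructor
      · rintro ⟨x, ⟨k, hk, rfl⟩, y, ⟨e, ⟨c, hc, rfl⟩, rfl⟩, rfl⟩
        refine ⟨genE (insert a s) (Function.update c a k),
          ⟨Function.update c a k, ?_, rfl⟩, ?_⟩
        · intro i hi
          rcases Finset.mem_insert.mp hi with rfl | hi'
          · simpa using hk
          · rw [Function.update_of_ne (by rintro rfl; exact ha hi')]
            exact hc i hi'
        · have hgen : genE (insert a s) (Function.update c a k)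
              = Finsupp.single k 1 + genE s c := by
            rw [genE, Finset.sum_insert ha, Function.update_self]
            congr 1
            refine Finset.sum_congr rfl (fun i hi => ?_)
            rw [Function.update_of_ne (by rintro rfl; exact ha hi)]
          rw [hgen]
          simp only [X_eq, monomial_mul, one_mul]
      · rintro ⟨e, ⟨c, hc, rfl⟩, rfl⟩
        refine ⟨X (c a), ⟨c a, hc a (Finset.mem_insert_self a s), rfl⟩,
          monomial (genE s c) (1 : K), ⟨genE s c, ⟨c, fun i hi => hc i (Finset.mem_insert_of_mem hi), rfl⟩, rfl⟩, ?_⟩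
        show X (c a) * monomial (genE s c) (1:K) = monomial (genE (insert a s) c) 1
        have : genE (insert a s) c = Finsupp.single (c a) 1 + genE s c := by
          rw [genE, Finset.sum_insert ha]; rfl
        rw [this, X_eq, monomial_mul, one_mul]

variable (F : Fin r → Finset (Fin n))

lemma memI (hF : ∀ i, (F i).Nonempty) (f : MvPolynomial (Fin n) K) :
    f ∈ (∏ i, PF (K := K) (F i)) ↔
      ∀ e ∈ f.support, ∃ c : Fin r → Fin n, (∀ i, c i ∈ F i) ∧ genE Finset.univ c ≤ e := by
  rw [prod_PF_eq F hF, mem_ideal_span_monomial_image]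
  constructor
  · intro h e he
    obtain ⟨si, ⟨c, hc, rfl⟩, hle⟩ := h e he
    exact ⟨c, fun i => hc i (Finset.mem_univ i), hle⟩
  · intro h e he
    obtain ⟨c, hc, hle⟩ := h e he
    exact ⟨genE Finset.univ c, ⟨c, fun i _ => hc i, rfl⟩, hle⟩

lemma memPF (C : Finset (Fin n)) (f : MvPolynomial (Fin n) K) :
    f ∈ PF (K := K) C ↔ ∀ e ∈ f.support, ∃ k ∈ C, e k ≠ 0 := by
  have : PF (K := K) C = Ideal.span (X '' (↑C : Set (Fin n))) := rfl
  rw [this, mem_ideal_span_X_image]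
  simp

theorem PF_isPrime (C : Finset (Fin n)) : (PF (K := K) C).IsPrime := by
  classical
  set φ : MvPolynomial (Fin n) K →+* MvPolynomial (Fin n) K :=
    (aeval fun k => if k ∈ C then 0 else X k).toRingHom with hφ
  have hker : PF (K := K) C = RingHom.ker φ := by
    apply le_antisymm
    · rw [PF, Ideal.span_le]
      rintro x ⟨k, hk, rfl⟩
      simp only [SetLike.mem_coe, RingHom.mem_ker, hφ, AlgHom.toRingHom_eq_coe,
        RingHom.coe_coe, aeval_X]
      rw [if_pos (Finset.mem_coe.mp hk)]
    · intro f hf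
      rw [RingHom.mem_ker] at hf
      rw [memPF]
      intro e he
      by_contra hno
      push_neg at hno
      -- show coeff e (φ f) = coeff e f ≠ 0, contradiction with φ f = 0
      have key : coeff e (φ f) = coeff e f := by
        conv_lhs => rw [← support_sum_monomial_coeff f]
        rw [map_sum]
        have hterm : ∀ d ∈ f.support,
            coeff e (φ (monomial d (coeff d f)))
              = if d = e then coeff e f else 0 := by
          intro d _
          by_cases hd : ∀ k ∈ C, d k = 0
          · have : φ (monomial d (coeff d f)) = monomial d (coeff d f) := by
              simp only [hφ, AlgHom.toRingHom_eq_coe, RingHom.coe_coe, aeval_monomial]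
              rw [algebraMap_eq]
              have : (Finsupp.prod d fun k e => (if k ∈ C then 0 else X k) ^ e)
                  = Finsupp.prod d fun k e => (X k : MvPolynomial (Fin n) K) ^ e := by
                apply Finsupp.prod_congr
                intro k hk
                rw [if_neg]
                intro hkC
                exact (Finsupp.mem_support_iff.mp hk) (hd k hkC)
              rw [this, ← monomial_eq]
            rw [this, coeff_monomial]
            split
            · rename_i h; subst h; rfl
            · rfl
          · push_neg at hd
            obtain ⟨k, hkC, hdk⟩ := hd
            have : φ (monomial d (coeff d f)) = 0 := by
              simp only [hφ, AlgHom.toRingHom_eq_coe, RingHom.coe_coe, aeval_monomial]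
              have : (Finsupp.prod d fun k e => (if k ∈ C then 0 else (X k : MvPolynomial (Fin n) K)) ^ e) = 0 := by
                apply Finset.prod_eq_zero (Finsupp.mem_support_iff.mpr hdk)
                simp only []
                rw [if_pos hkC, zero_pow hdk]
              rw [this, mul_zero]
            rw [this, coeff_zero]
            rw [if_neg]
            rintro rfl
            exact hdk (hno k hkC)
        rw [MvPolynomial.coeff_sum, Finset.sum_congr rfl hterm,
          Finset.sum_ite_eq' f.support e (fun _ => coeff e f), if_pos he]
      rw [hf, coeff_zero] at key
      exact MvPolynomial.mem_support_iff.mp he key.symm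
  rw [hker]
  exact RingHom.ker_isPrime φ

lemma ann_mem_iff (I : Ideal (MvPolynomial (Fin n) K)) (f g : MvPolynomial (Fin n) K) :
    g ∈ (⊥ : Submodule (MvPolynomial (Fin n) K) (MvPolynomial (Fin n) K ⧸ I)).colon
        {(Ideal.Quotient.mk I) f} ↔ g * f ∈ I := by
  rw [Submodule.mem_colon_singleton, Submodule.mem_bot]
  have : g • (Ideal.Quotient.mk I) f = (Ideal.Quotient.mk I) (g * f) := by
    rw [← smul_eq_mul]
    exact (Submodule.Quotient.mk_smul I g f).symm
  rw [this, Ideal.Quotient.eq_zero_iff_mem]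

lemma mul_monomial_mem_iff (hF : ∀ i, (F i).Nonempty) (g : MvPolynomial (Fin n) K)
    (b : Fin n →₀ ℕ) :
    g * monomial b (1 : K) ∈ (∏ i, PF (K := K) (F i)) ↔
      ∀ e ∈ g.support, ∃ c : Fin r → Fin n, (∀ i, c i ∈ F i) ∧
        genE Finset.univ c ≤ e + b := by
  rw [memI F hF]
  constructor
  · intro h e he
    have hmem : e + b ∈ (g * monomial b (1 : K)).support := by
      rw [MvPolynomial.mem_support_iff, coeff_mul_monomial', if_pos le_add_self,
        add_tsub_cancel_right, mul_one]
      exact MvPolynomial.mem_support_iff.mp he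
    exact h (e + b) hmem
  · intro h e' he'
    rw [MvPolynomial.mem_support_iff, coeff_mul_monomial'] at he'
    split at he'
    · rename_i hble
      rw [mul_one] at he'
      obtain ⟨c, hc, hle⟩ := h (e' - b) (MvPolynomial.mem_support_iff.mpr he')
      refine ⟨c, hc, ?_⟩
      rwa [tsub_add_cancel_of_le hble] at hle
    · exact absurd rfl he'

/-- The key combinatorial condition extracted from `P_A = I : x^b`. -/
def Star (F : Fin r → Finset (Fin n)) (b : Fin n →₀ ℕ) (A : Finset (Fin n)) : Prop :=
  ∀ e : Fin n →₀ ℕ,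
    (∃ c : Fin r → Fin n, (∀ i, c i ∈ F i) ∧ genE Finset.univ c ≤ e + b)
      ↔ ∃ k ∈ A, e k ≠ 0

lemma star_iff_forall (hF : ∀ i, (F i).Nonempty) (b : Fin n →₀ ℕ) (A : Finset (Fin n)) :
    (∀ g : MvPolynomial (Fin n) K,
        g ∈ PF (K := K) A ↔ g * monomial b 1 ∈ (∏ i, PF (K := K) (F i)))
      → Star F b A := by
  classical
  intro h e
  have h1 := h (monomial e (1 : K))
  rw [memPF, mul_monomial_mem_iff F hF] at h1
  have hsupp : (monomial e (1 : K)).support = {e} := by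
    rw [support_monomial, if_neg one_ne_zero]
  rw [hsupp] at h1
  simp only [Finset.mem_singleton, forall_eq] at h1
  exact h1.symm

lemma star_to_PEQ (hF : ∀ i, (F i).Nonempty) (b : Fin n →₀ ℕ) (A : Finset (Fin n))
    (hs : Star F b A) (g : MvPolynomial (Fin n) K) :
    g ∈ PF (K := K) A ↔ g * monomial b 1 ∈ (∏ i, PF (K := K) (F i)) := by
  rw [memPF, mul_monomial_mem_iff F hF]
  exact forall₂_congr fun e _ => (hs e).symm

/-- monomial witness extraction -/
lemma exists_monomial_witness (hF : ∀ i, (F i).Nonempty) (A : Finset (Fin n))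
    (hprime : (PF (K := K) A).IsPrime) (f : MvPolynomial (Fin n) K)
    (hf : ∀ g : MvPolynomial (Fin n) K,
      g ∈ PF (K := K) A ↔ g * f ∈ (∏ i, PF (K := K) (F i))) :
    ∃ b : Fin n →₀ ℕ, ∀ g : MvPolynomial (Fin n) K,
      g ∈ PF (K := K) A ↔ g * monomial b 1 ∈ (∏ i, PF (K := K) (F i)) := by
  classical
  set I := ∏ i, PF (K := K) (F i) with hI
  -- f ≠ 0
  have hfne : f ≠ 0 := by
    rintro rfl
    have : (1 : MvPolynomial (Fin n) K) ∈ PF (K := K) A := by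
      rw [hf 1]; simp
    exact hprime.ne_top ((Ideal.eq_top_iff_one _).mpr this)
  -- part 1 : every b in supp f works one way
  have part1 : ∀ b ∈ f.support, ∀ g ∈ PF (K := K) A, g * monomial b 1 ∈ I := by
    intro b hb g hg
    have hcolon : PF (K := K) A ≤ I.colon (Ideal.span {(monomial b 1 : MvPolynomial (Fin n) K)}) := by
      rw [PF, Ideal.span_le]
      rintro x ⟨k, hk, rfl⟩
      simp only [SetLike.mem_coe, Ideal.mem_colon_span_singleton]
      have hXk : (X k : MvPolynomial (Fin n) K) ∈ PF (K := K) A :=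
        Ideal.subset_span ⟨k, hk, rfl⟩
      have hXf : X k * f ∈ I := (hf _).mp hXk
      rw [memI F hF] at hXf
      have hsupp : Finsupp.single k 1 + b ∈ (X k * f).support := by
        rw [MvPolynomial.mem_support_iff, X_eq, coeff_monomial_mul',
          if_pos (self_le_add_right _ _), add_tsub_cancel_left, one_mul]
        exact MvPolynomial.mem_support_iff.mp hb
      obtain ⟨c, hc, hle⟩ := hXf _ hsupp
      rw [X_eq, monomial_mul, one_mul, memI F hF]
      intro e he
      rw [support_monomial, if_neg one_ne_zero, Finset.mem_singleton] at he
      subst he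
      exact ⟨c, fun i => hc i, hle⟩
    have := hcolon hg
    rwa [Ideal.mem_colon_span_singleton] at this
  -- part 2
  have part2 : ∃ b ∈ f.support, ∀ g : MvPolynomial (Fin n) K,
      g * monomial b 1 ∈ I → g ∈ PF (K := K) A := by
    by_contra hcon
    push_neg at hcon
    have hch : ∀ b : Fin n →₀ ℕ, ∃ g : MvPolynomial (Fin n) K,
        b ∈ f.support → (g * monomial b 1 ∈ I ∧ g ∉ PF (K := K) A) := by
      intro b
      by_cases hb : b ∈ f.support
      · obtain ⟨g, hg1, hg2⟩ := hcon b hb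
        exact ⟨g, fun _ => ⟨hg1, hg2⟩⟩
      · exact ⟨0, fun h => absurd h hb⟩
    choose g hg using hch
    set G := ∏ b ∈ f.support, g b with hG
    have hGnot : G ∉ PF (K := K) A := by
      intro hGmem
      haveI := hprime
      rw [hG, Ideal.IsPrime.prod_mem_iff] at hGmem
      obtain ⟨b, hb, hgb⟩ := hGmem
      exact ((hg b) hb).2 hgb
    have hGf : G * f ∈ I := by
      have hre : G * f = ∑ b ∈ f.support, G * monomial b (coeff b f) := by
        rw [← Finset.mul_sum, support_sum_monomial_coeff]
      rw [hre]
      apply Ideal.sum_mem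
      intro b hb
      have key : G * monomial b (coeff b f)
          = (C (coeff b f) * ∏ b' ∈ f.support.erase b, g b') * (g b * monomial b 1) := by
        rw [hG, ← Finset.mul_prod_erase f.support g hb]
        have : monomial b (coeff b f) = C (coeff b f) * monomial b 1 := by
          rw [C_mul_monomial, mul_one]
        rw [this]; ring
      rw [key]
      exact Ideal.mul_mem_left _ _ ((hg b) hb).1
    exact hGnot ((hf G).mpr hGf)
  obtain ⟨b, hb, hb2⟩ := part2
  exact ⟨b, fun gg => ⟨fun h => part1 b hb gg h, fun h => hb2 gg h⟩⟩

/-- degree restricted to variables in `C` -/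
def degC (C : Finset (Fin n)) (w : Fin n →₀ ℕ) : ℕ := ∑ k ∈ C, w k

lemma degC_mono (C : Finset (Fin n)) {w w' : Fin n →₀ ℕ} (h : w ≤ w') :
    degC C w ≤ degC C w' :=
  Finset.sum_le_sum fun k _ => h k

lemma degC_add (C : Finset (Fin n)) (w w' : Fin n →₀ ℕ) :
    degC C (w + w') = degC C w + degC C w' := by
  simp [degC, Finset.sum_add_distrib]

lemma degC_single (C : Finset (Fin n)) (k : Fin n) (m : ℕ) :
    degC C (Finsupp.single k m) = if k ∈ C then m else 0 := by
  classical
  simp only [degC, Finsupp.single_apply]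
  rw [Finset.sum_ite_eq C k (fun _ => m)]

lemma degC_genE (C : Finset (Fin n)) (s : Finset (Fin r)) (c : Fin r → Fin n) :
    degC C (genE s c) = ∑ i ∈ s, (if c i ∈ C then 1 else 0) := by
  classical
  simp only [degC, genE_apply]
  rw [Finset.sum_comm]
  refine Finset.sum_congr rfl fun i _ => ?_
  rw [Finset.sum_ite_eq C (c i) (fun _ => 1)]

/-- the "big exterior" exponent vector -/
noncomputable def eD (A : Finset (Fin n)) (r : ℕ) : Fin n →₀ ℕ :=
  ∑ j ∈ Aᶜ, Finsupp.single j r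

lemma eD_apply (A : Finset (Fin n)) (j : Fin n) :
    eD A r j = if j ∈ A then 0 else r := by
  classical
  rw [eD, Finsupp.finset_sum_apply]
  simp only [Finsupp.single_apply]
  rw [Finset.sum_ite_eq' Aᶜ j (fun _ => r)]
  simp [Finset.mem_compl]

lemma star_contr (A : Finset (Fin n)) (b : Fin n →₀ ℕ) (hstar : Star F b A)
    (c : Fin r → Fin n) (hc : ∀ i, c i ∈ F i)
    (hb : ∀ j ∈ A, genE Finset.univ c j ≤ b j) : False := by
  have hle : genE Finset.univ c ≤ eD A r + b := by
    intro j
    by_cases hj : j ∈ A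
    · simpa [Finsupp.add_apply, eD_apply, hj] using hb j hj
    · have h1 : genE Finset.univ c j ≤ r := by
        simpa using genE_le_card Finset.univ c j
      simp only [Finsupp.add_apply, eD_apply, if_neg hj]
      omega
  obtain ⟨k, hkA, hk⟩ := (hstar (eD A r)).mp ⟨c, hc, hle⟩
  rw [eD_apply, if_pos hkA] at hk
  exact hk rfl

theorem forward_sat (A : Finset (Fin n)) (b : Fin n →₀ ℕ) (hstar : Star F b A) :
    ∀ k ∈ A, ∃ i, k ∈ F i ∧ F i ⊆ A := by
  classical
  intro k hk
  by_contra hcon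
  push_neg at hcon
  obtain ⟨c, hc, hle⟩ := (hstar (Finsupp.single k 1)).mpr
    ⟨k, hk, by simp⟩
  have hch : ∀ i, ∃ d, d ∈ F i ∧ (c i = k → d ∉ A) ∧ (c i ≠ k → d = c i) := by
    intro i
    by_cases h : c i = k
    · have hFi : ¬ F i ⊆ A := hcon i (h ▸ hc i)
      obtain ⟨d, hdF, hdA⟩ := Finset.not_subset.mp hFi
      exact ⟨d, hdF, fun _ => hdA, fun h' => absurd h h'⟩
    · exact ⟨c i, hc i, fun h' => absurd h' h, fun _ => rfl⟩
  choose c' hc'F hc'k hc'ne using hch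
  refine star_contr F A b hstar c' hc'F ?_
  intro j hj
  rw [genE_apply]
  by_cases hjk : j = k
  · subst hjk
    have : ∀ i ∈ Finset.univ, (if c' i = j then 1 else 0) = 0 := by
      intro i _
      rw [if_neg]
      intro hji
      by_cases h : c i = j
      · exact (hc'k i h) (hji ▸ hj)
      · exact h ((hc'ne i h).symm.trans hji)
    rw [Finset.sum_congr rfl this]
    simp
  · have hgle : genE Finset.univ c j ≤ b j := by
      have := hle j
      simpa [Finsupp.add_apply, Finsupp.single_apply, if_neg (Ne.symm hjk)] using this
    refine le_trans ?_ (le_trans (le_of_eq (genE_apply _ _ _).symm) hgle)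
    apply Finset.sum_le_sum
    intro i _
    by_cases h : c i = k
    · have h0 : (if c' i = j then 1 else 0) = 0 := by
        rw [if_neg]
        intro hji
        exact (hc'k i h) (hji ▸ hj)
      rw [h0]
      exact Nat.zero_le _
    · rw [hc'ne i h]

/-- indices whose variable set lies inside `A` -/
noncomputable def TA (F : Fin r → Finset (Fin n)) (A : Finset (Fin n)) : Finset (Fin r) :=
  Finset.univ.filter (fun i => F i ⊆ A)

lemma mem_TA {A : Finset (Fin n)} {i : Fin r} : i ∈ TA F A ↔ F i ⊆ A := by
  simp [TA]

theorem forward_conn (A : Finset (Fin n)) (b : Fin n →₀ ℕ) (hstar : Star F b A)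
    (T1 : Finset (Fin r)) (hT1 : T1 ⊆ TA F A) (hne1 : T1.Nonempty)
    (hne2 : (TA F A \ T1).Nonempty) (hF : ∀ i, (F i).Nonempty) :
    ∃ i ∈ T1, ∃ j ∈ TA F A \ T1, (F i ∩ F j).Nonempty := by
  classical
  by_contra hcon
  push_neg at hcon
  set C1 : Finset (Fin n) := T1.biUnion F with hC1
  set C2 : Finset (Fin n) := (TA F A \ T1).biUnion F with hC2
  have hC1A : ∀ x ∈ C1, x ∈ A := by
    intro x hx
    obtain ⟨i, hi, hxi⟩ := Finset.mem_biUnion.mp hx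
    exact (mem_TA F).mp (hT1 hi) hxi
  have hC2A : ∀ x ∈ C2, x ∈ A := by
    intro x hx
    obtain ⟨i, hi, hxi⟩ := Finset.mem_biUnion.mp hx
    exact (mem_TA F).mp (Finset.mem_sdiff.mp hi).1 hxi
  have hdisj : ∀ x, x ∈ C1 → x ∈ C2 → False := by
    intro x hx1 hx2
    obtain ⟨i, hi, hxi⟩ := Finset.mem_biUnion.mp hx1
    obtain ⟨j, hj, hxj⟩ := Finset.mem_biUnion.mp hx2
    have := hcon i hi j hj
    have : x ∈ F i ∩ F j := Finset.mem_inter.mpr ⟨hxi, hxj⟩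
    rw [hcon i hi j hj] at this
    exact absurd this (Finset.notMem_empty x)
  obtain ⟨i1, hi1⟩ := hne1
  obtain ⟨k1, hk1⟩ := hF i1
  have hk1C1 : k1 ∈ C1 := Finset.mem_biUnion.mpr ⟨i1, hi1, hk1⟩
  obtain ⟨j2, hj2⟩ := hne2
  obtain ⟨k2, hk2⟩ := hF j2
  have hk2C2 : k2 ∈ C2 := Finset.mem_biUnion.mpr ⟨j2, hj2, hk2⟩
  obtain ⟨c1, hc1, hle1⟩ := (hstar (Finsupp.single k1 1)).mpr
    ⟨k1, hC1A k1 hk1C1, by simp⟩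
  obtain ⟨c2, hc2, hle2⟩ := (hstar (Finsupp.single k2 1)).mpr
    ⟨k2, hC2A k2 hk2C2, by simp⟩
  have hch : ∀ i, ∃ d, d ∈ F i ∧ (i ∉ TA F A → d ∉ A) := by
    intro i
    by_cases h : i ∈ TA F A
    · exact ⟨(hF i).choose, (hF i).choose_spec, fun h' => absurd h h'⟩
    · obtain ⟨d, hdF, hdA⟩ := Finset.not_subset.mp (fun hsub => h ((mem_TA F).mpr hsub))
      exact ⟨d, hdF, fun _ => hdA⟩
  choose d hdF hdA using hch
  set c : Fin r → Fin n := fun i =>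
    if i ∈ T1 then c2 i else if i ∈ TA F A then c1 i else d i with hcdef
  have hcF : ∀ i, c i ∈ F i := by
    intro i
    simp only [hcdef]
    split
    · exact hc2 i
    · split
      · exact hc1 i
      · exact hdF i
  refine star_contr F A b hstar c hcF ?_
  intro j hj
  by_cases hj1 : j ∈ C1
  · -- bound through c2
    have hle : ∀ i, (if c i = j then 1 else 0) ≤ (if c2 i = j then 1 else 0) := by
      intro i
      simp only [hcdef]
      by_cases h1 : i ∈ T1
      · simp [h1]
      · have h0 : (if i ∈ T1 then c2 i else if i ∈ TA F A then c1 i else d i) ≠ j := by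
          rw [if_neg h1]
          by_cases h2 : i ∈ TA F A
          · rw [if_pos h2]
            intro hc1j
            have : c1 i ∈ C2 := Finset.mem_biUnion.mpr
              ⟨i, Finset.mem_sdiff.mpr ⟨h2, h1⟩, hc1 i⟩
            exact hdisj j hj1 (hc1j ▸ this)
          · rw [if_neg h2]
            intro hdj
            exact (hdA i h2) (hdj ▸ hj)
        rw [if_neg h0]
        exact Nat.zero_le _
    have : (genE Finset.univ c) j ≤ (genE Finset.univ c2) j := by
      rw [genE_apply, genE_apply]
      exact Finset.sum_le_sum fun i _ => hle i
    have h2 : (genE Finset.univ c2) j ≤ b j := by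
      have := hle2 j
      have hjk2 : j ≠ k2 := fun h => hdisj j hj1 (h ▸ hk2C2)
      simpa [Finsupp.add_apply, Finsupp.single_apply, if_neg (Ne.symm hjk2)] using this
    omega
  · by_cases hj2' : j ∈ C2
    · -- bound through c1
      have hle : ∀ i, (if c i = j then 1 else 0) ≤ (if c1 i = j then 1 else 0) := by
        intro i
        simp only [hcdef]
        by_cases h1 : i ∈ T1
        · have h0 : (if i ∈ T1 then c2 i else if i ∈ TA F A then c1 i else d i) ≠ j := by
            rw [if_pos h1]
            intro hc2j
            have : c2 i ∈ C1 := Finset.mem_biUnion.mpr ⟨i, h1, hc2 i⟩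
            exact hdisj j (hc2j ▸ this) hj2'
          rw [if_neg h0]
          exact Nat.zero_le _
        · by_cases h2 : i ∈ TA F A
          · simp [h1, h2]
          · have h0 : (if i ∈ T1 then c2 i else if i ∈ TA F A then c1 i else d i) ≠ j := by
              rw [if_neg h1, if_neg h2]
              intro hdj
              exact (hdA i h2) (hdj ▸ hj)
            rw [if_neg h0]
            exact Nat.zero_le _
      have : (genE Finset.univ c) j ≤ (genE Finset.univ c1) j := by
        rw [genE_apply, genE_apply]
        exact Finset.sum_le_sum fun i _ => hle i
      have h2 : (genE Finset.univ c1) j ≤ b j := by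
        have := hle1 j
        have hjk1 : j ≠ k1 := fun h => hdisj j (h ▸ hk1C1) hj2'
        simpa [Finsupp.add_apply, Finsupp.single_apply, if_neg (Ne.symm hjk1)] using this
      omega
    · -- j in neither: all contributions vanish
      have : (genE Finset.univ c) j = 0 := by
        rw [genE_apply]
        apply Finset.sum_eq_zero
        intro i _
        have h0 : c i ≠ j := by
          simp only [hcdef]
          by_cases h1 : i ∈ T1
          · rw [if_pos h1]
            intro hc2j
            exact hj1 (hc2j ▸ Finset.mem_biUnion.mpr ⟨i, h1, hc2 i⟩)
          · rw [if_neg h1]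
            by_cases h2 : i ∈ TA F A
            · rw [if_pos h2]
              intro hc1j
              exact hj2' (hc1j ▸ Finset.mem_biUnion.mpr
                ⟨i, Finset.mem_sdiff.mpr ⟨h2, h1⟩, hc1 i⟩)
            · rw [if_neg h2]
              intro hdj
              exact (hdA i h2) (hdj ▸ hj)
        rw [if_neg h0]
      omega

/-- the induction invariant: `u` is a tree-monomial for `T`. -/
def Good (F : Fin r → Finset (Fin n)) (T : Finset (Fin r)) (u : Fin n →₀ ℕ) : Prop :=
  ∀ k : Fin n, (∃ i ∈ T, k ∈ F i) →
    ∃ c : Fin r → Fin n, (∀ i ∈ T, c i ∈ F i) ∧ genE T c ≤ Finsupp.single k 1 + u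

lemma good_singleton (i0 : Fin r) : Good F {i0} 0 := by
  intro k ⟨i, hi, hk⟩
  rw [Finset.mem_singleton] at hi
  subst hi
  refine ⟨fun _ => k, fun i' hi' => by rwa [Finset.mem_singleton.mp hi'], ?_⟩
  rw [genE, Finset.sum_singleton, add_zero]

lemma good_insert {T : Finset (Fin r)} {u : Fin n →₀ ℕ} (hg : Good F T u)
    {j : Fin r} (hj : j ∉ T) {i' : Fin r} (hi' : i' ∈ T) {k0 : Fin n}
    (hk0j : k0 ∈ F j) (hk0i : k0 ∈ F i') :
    Good F (insert j T) (u + Finsupp.single k0 1) := by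
  classical
  intro k ⟨i, hi, hk⟩
  have genE_insert : ∀ c : Fin r → Fin n,
      genE (insert j T) c = Finsupp.single (c j) 1 + genE T c := by
    intro c
    rw [genE, Finset.sum_insert hj]
    rfl
  have update_agree : ∀ (c : Fin r → Fin n) (v : Fin n),
      genE T (Function.update c j v) = genE T c := by
    intro c v
    refine Finset.sum_congr rfl fun i2 hi2 => ?_
    rw [Function.update_of_ne (by rintro rfl; exact hj hi2)]
  rcases Finset.mem_insert.mp hi with rfl | hiT
  · -- k ∈ F i with i = j
    obtain ⟨c, hcT, hle⟩ := hg k0 ⟨i', hi', hk0i⟩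
    refine ⟨Function.update c i k, ?_, ?_⟩
    · intro i2 hi2
      rcases Finset.mem_insert.mp hi2 with rfl | hi2T
      · rwa [Function.update_self]
      · rw [Function.update_of_ne (by rintro rfl; exact hj hi2T)]
        exact hcT i2 hi2T
    · rw [genE_insert, Function.update_self, update_agree]
      calc Finsupp.single k 1 + genE T c
          ≤ Finsupp.single k 1 + (Finsupp.single k0 1 + u) := by
            exact add_le_add le_rfl hle
        _ = Finsupp.single k 1 + (u + Finsupp.single k0 1) := by abel
  · obtain ⟨c, hcT, hle⟩ := hg k ⟨i, hiT, hk⟩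
    refine ⟨Function.update c j k0, ?_, ?_⟩
    · intro i2 hi2
      rcases Finset.mem_insert.mp hi2 with rfl | hi2T
      · rwa [Function.update_self]
      · rw [Function.update_of_ne (by rintro rfl; exact hj hi2T)]
        exact hcT i2 hi2T
    · rw [genE_insert, Function.update_self, update_agree]
      calc Finsupp.single k0 1 + genE T c
          ≤ Finsupp.single k0 1 + (Finsupp.single k 1 + u) := add_le_add le_rfl hle
        _ = Finsupp.single k 1 + (u + Finsupp.single k0 1) := by abel

/-- growing a good pair along a connected set -/
lemma build (C : Finset (Fin n)) (T : Finset (Fin r))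
    (hTC : ∀ i ∈ T, F i ⊆ C)
    (conn : ∀ T1 ⊆ T, T1.Nonempty → (T \ T1).Nonempty →
      ∃ i ∈ T1, ∃ j ∈ T \ T1, (F i ∩ F j).Nonempty) :
    ∀ (m : ℕ) (T' : Finset (Fin r)), T' ⊆ T → T'.Nonempty → (T \ T').card = m →
      (∃ u, Good F T' u ∧ degC C u = T'.card - 1) →
      ∃ u, Good F T u ∧ degC C u = T.card - 1 := by
  classical
  intro m
  induction m with
  | zero =>
      intro T' hsub hne hcard hex
      have : T \ T' = ∅ := Finset.card_eq_zero.mp hcard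
      have hTT' : T = T' :=
        Finset.Subset.antisymm (fun x hx => by
          by_contra hx'
          exact absurd (Finset.mem_sdiff.mpr ⟨hx, hx'⟩) (by rw [this]; simp)) hsub
      rwa [hTT']
  | succ m ih =>
      intro T' hsub hne hcard hex
      have hnonempty : (T \ T').Nonempty := by
        rw [← Finset.card_pos, hcard]; omega
      obtain ⟨i', hi', j, hj, k0, hk0⟩ := conn T' hsub hne hnonempty
      rw [Finset.mem_inter] at hk0
      have hjT : j ∈ T := (Finset.mem_sdiff.mp hj).1
      have hjT' : j ∉ T' := (Finset.mem_sdiff.mp hj).2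
      obtain ⟨u, hu, hdeg⟩ := hex
      refine ih (insert j T') (Finset.insert_subset hjT hsub)
        (Finset.insert_nonempty j T') ?_
        ⟨u + Finsupp.single k0 1, good_insert F hu hjT' hi' hk0.2 hk0.1, ?_⟩
      · have : T \ insert j T' = (T \ T').erase j := by
          ext x
          simp only [Finset.mem_sdiff, Finset.mem_insert, Finset.mem_erase]
          tauto
        rw [this, Finset.card_erase_of_mem hj, hcard]
        omega
      · rw [degC_add, hdeg, degC_single, if_pos (hTC i' (hsub hi') hk0.1),
          Finset.card_insert_of_notMem hjT']
        have : 1 ≤ T'.card := Finset.card_pos.mpr hne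
        omega

theorem backward (hF : ∀ i, (F i).Nonempty) (C : Finset (Fin n))
    (sat : ∀ k ∈ C, ∃ i, k ∈ F i ∧ F i ⊆ C)
    (hTne : (TA F C).Nonempty)
    (conn : ∀ T1 ⊆ TA F C, T1.Nonempty → (TA F C \ T1).Nonempty →
      ∃ i ∈ T1, ∃ j ∈ TA F C \ T1, (F i ∩ F j).Nonempty) :
    ∃ b : Fin n →₀ ℕ, Star F b C := by
  classical
  set T := TA F C with hT
  obtain ⟨i0, hi0⟩ := hTne
  obtain ⟨u, hu, hdeg⟩ := build F C T (fun i hi => (mem_TA F).mp hi) conn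
    ((T \ {i0}).card) {i0} (Finset.singleton_subset_iff.mpr hi0)
    (Finset.singleton_nonempty i0) rfl
    ⟨0, good_singleton F i0, by simp [degC]⟩
  -- choose exterior picks
  have hch : ∀ i, ∃ dd, dd ∈ F i ∧ (i ∉ T → dd ∉ C) := by
    intro i
    by_cases h : i ∈ T
    · exact ⟨(hF i).choose, (hF i).choose_spec, fun h' => absurd h h'⟩
    · obtain ⟨dd, hdF, hdC⟩ := Finset.not_subset.mp (fun hs => h ((mem_TA F).mpr hs))
      exact ⟨dd, hdF, fun _ => hdC⟩
  choose d hdF hdC using hch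
  set v : Fin n →₀ ℕ := ∑ i ∈ Tᶜ, Finsupp.single (d i) 1 with hv
  refine ⟨u + v, fun e => ⟨?_, ?_⟩⟩
  · -- no valid assignment fits if e misses C
    rintro ⟨c, hc, hle⟩
    by_contra hno
    push_neg at hno
    have h1 : T.card ≤ degC C (genE Finset.univ c) := by
      rw [degC_genE]
      calc T.card = ∑ i ∈ T, 1 := by simp
        _ ≤ ∑ i ∈ T, (if c i ∈ C then 1 else 0) := by
            apply Finset.sum_le_sum
            intro i hi
            rw [if_pos ((mem_TA F).mp hi (hc i))]
        _ ≤ ∑ i ∈ Finset.univ, (if c i ∈ C then 1 else 0) := by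
            apply Finset.sum_le_sum_of_subset (Finset.subset_univ T)
    have h2 : degC C (e + (u + v)) = T.card - 1 := by
      rw [degC_add, degC_add, hdeg]
      have he0 : degC C e = 0 := by
        apply Finset.sum_eq_zero
        intro k hk
        exact hno k hk
      have hv0 : degC C v = 0 := by
        rw [hv, degC]
        apply Finset.sum_eq_zero
        intro k hk
        rw [Finsupp.finset_sum_apply]
        apply Finset.sum_eq_zero
        intro i hi
        rw [Finsupp.single_apply, if_neg]
        rintro rfl
        exact (hdC i (Finset.mem_compl.mp hi)) hk
      rw [he0, hv0]
      omega
    have h3 := degC_mono C hle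
    have h4 : 1 ≤ T.card := Finset.card_pos.mpr ⟨i0, hi0⟩
    omega
  · rintro ⟨k, hkC, hke⟩
    obtain ⟨i1, hk1, hsub1⟩ := sat k hkC
    obtain ⟨c, hcT, hle⟩ := hu k ⟨i1, (mem_TA F).mpr hsub1, hk1⟩
    set c' : Fin r → Fin n := fun i => if i ∈ T then c i else d i with hc'
    refine ⟨c', ?_, ?_⟩
    · intro i
      simp only [hc']
      split
      · exact hcT i (by assumption)
      · exact hdF i
    · have hsplit : genE Finset.univ c' = genE T c' + genE Tᶜ c' := by
        rw [genE, genE, genE, Finset.sum_add_sum_compl]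
      have hT1 : genE T c' = genE T c := by
        refine Finset.sum_congr rfl fun i hi => ?_
        simp only [hc', if_pos hi]
      have hT2 : genE Tᶜ c' = v := by
        rw [hv]
        refine Finset.sum_congr rfl fun i hi => ?_
        simp only [hc', if_neg (Finset.mem_compl.mp hi)]
      rw [hsplit, hT1, hT2]
      calc genE T c + v ≤ (Finsupp.single k 1 + u) + v := add_le_add hle le_rfl
        _ = Finsupp.single k 1 + (u + v) := by abel
        _ ≤ e + (u + v) := by
            refine add_le_add ?_ le_rfl
            rw [Finsupp.single_le_iff]
            omega

theorem conn_union (hF : ∀ i, (F i).Nonempty) (A B : Finset (Fin n))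
    (hAB : (A ∩ B).Nonempty)
    (satA : ∀ k ∈ A, ∃ i, k ∈ F i ∧ F i ⊆ A)
    (satB : ∀ k ∈ B, ∃ i, k ∈ F i ∧ F i ⊆ B)
    (connA : ∀ T1 ⊆ TA F A, T1.Nonempty → (TA F A \ T1).Nonempty →
      ∃ i ∈ T1, ∃ j ∈ TA F A \ T1, (F i ∩ F j).Nonempty)
    (connB : ∀ T1 ⊆ TA F B, T1.Nonempty → (TA F B \ T1).Nonempty →
      ∃ i ∈ T1, ∃ j ∈ TA F B \ T1, (F i ∩ F j).Nonempty) :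
    ∀ T1 ⊆ TA F (A ∪ B), T1.Nonempty → (TA F (A ∪ B) \ T1).Nonempty →
      ∃ i ∈ T1, ∃ j ∈ TA F (A ∪ B) \ T1, (F i ∩ F j).Nonempty := by
  classical
  obtain ⟨k0, hk0⟩ := hAB
  rw [Finset.mem_inter] at hk0
  obtain ⟨iA, hk0iA, hiA⟩ := satA k0 hk0.1
  obtain ⟨jB, hk0jB, hjB⟩ := satB k0 hk0.2
  have hiA' : iA ∈ TA F A := (mem_TA F).mpr hiA
  have hjB' : jB ∈ TA F B := (mem_TA F).mpr hjB
  have hAsubC : TA F A ⊆ TA F (A ∪ B) := by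
    intro i hi
    exact (mem_TA F).mpr (fun x hx => Finset.mem_union_left B ((mem_TA F).mp hi hx))
  have hBsubC : TA F B ⊆ TA F (A ∪ B) := by
    intro i hi
    exact (mem_TA F).mpr (fun x hx => Finset.mem_union_right A ((mem_TA F).mp hi hx))
  intro T1 hT1 hne1 hne2
  -- helper : if some set X ⊆ TA F (A∪B) avoids T1 but X has a member, edge from inside
  have insideA : ∀ j' ∈ TA F (A ∪ B), j' ∉ T1 → TA F A ⊆ T1 →
      (∃ k ∈ A, k ∈ F j') → ∃ i ∈ T1, ∃ j ∈ TA F (A ∪ B) \ T1, (F i ∩ F j).Nonempty := by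
    rintro j' hj'C hj'T1 hsub ⟨k, hkA, hkFj⟩
    obtain ⟨i2, hk2, hsub2⟩ := satA k hkA
    exact ⟨i2, hsub ((mem_TA F).mpr hsub2), j', Finset.mem_sdiff.mpr ⟨hj'C, hj'T1⟩,
      ⟨k, Finset.mem_inter.mpr ⟨hk2, hkFj⟩⟩⟩
  have insideB : ∀ j' ∈ TA F (A ∪ B), j' ∉ T1 → TA F B ⊆ T1 →
      (∃ k ∈ B, k ∈ F j') → ∃ i ∈ T1, ∃ j ∈ TA F (A ∪ B) \ T1, (F i ∩ F j).Nonempty := by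
    rintro j' hj'C hj'T1 hsub ⟨k, hkB, hkFj⟩
    obtain ⟨i2, hk2, hsub2⟩ := satB k hkB
    exact ⟨i2, hsub ((mem_TA F).mpr hsub2), j', Finset.mem_sdiff.mpr ⟨hj'C, hj'T1⟩,
      ⟨k, Finset.mem_inter.mpr ⟨hk2, hkFj⟩⟩⟩
  -- lifting connA results
  have liftA : (TA F A ∩ T1).Nonempty → (TA F A \ T1).Nonempty →
      ∃ i ∈ T1, ∃ j ∈ TA F (A ∪ B) \ T1, (F i ∩ F j).Nonempty := by
    intro hint hdiff
    have : TA F A \ (TA F A ∩ T1) = TA F A \ T1 := by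
      ext x; simp only [Finset.mem_sdiff, Finset.mem_inter]; tauto
    obtain ⟨i, hi, j, hj, hnon⟩ := connA (TA F A ∩ T1) Finset.inter_subset_left hint
      (by rwa [this])
    rw [this] at hj
    rw [Finset.mem_sdiff] at hj
    exact ⟨i, (Finset.mem_inter.mp hi).2, j,
      Finset.mem_sdiff.mpr ⟨hAsubC hj.1, hj.2⟩, hnon⟩
  have liftB : (TA F B ∩ T1).Nonempty → (TA F B \ T1).Nonempty →
      ∃ i ∈ T1, ∃ j ∈ TA F (A ∪ B) \ T1, (F i ∩ F j).Nonempty := by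
    intro hint hdiff
    have : TA F B \ (TA F B ∩ T1) = TA F B \ T1 := by
      ext x; simp only [Finset.mem_sdiff, Finset.mem_inter]; tauto
    obtain ⟨i, hi, j, hj, hnon⟩ := connB (TA F B ∩ T1) Finset.inter_subset_left hint
      (by rwa [this])
    rw [this] at hj
    rw [Finset.mem_sdiff] at hj
    exact ⟨i, (Finset.mem_inter.mp hi).2, j,
      Finset.mem_sdiff.mpr ⟨hBsubC hj.1, hj.2⟩, hnon⟩
  by_cases hAsub : TA F A ⊆ T1
  · by_cases hBsub : TA F B ⊆ T1
    · -- both inside T1; pick element outside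
      obtain ⟨j', hj'⟩ := hne2
      rw [Finset.mem_sdiff] at hj'
      obtain ⟨k, hk⟩ := hF j'
      have hkAB : k ∈ A ∪ B := (mem_TA F).mp hj'.1 hk
      rcases Finset.mem_union.mp hkAB with hkA | hkB
      · exact insideA j' hj'.1 hj'.2 hAsub ⟨k, hkA, hk⟩
      · exact insideB j' hj'.1 hj'.2 hBsub ⟨k, hkB, hk⟩
    · have hBdiff : (TA F B \ T1).Nonempty := by
        obtain ⟨x, hx, hx'⟩ := Finset.not_subset.mp hBsub
        exact ⟨x, Finset.mem_sdiff.mpr ⟨hx, hx'⟩⟩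
      by_cases hBint : (TA F B ∩ T1).Nonempty
      · exact liftB hBint hBdiff
      · -- all of TA F B avoids T1 ; edge iA – jB
        have hjBnot : jB ∉ T1 := by
          intro h
          exact hBint ⟨jB, Finset.mem_inter.mpr ⟨hjB', h⟩⟩
        exact ⟨iA, hAsub hiA', jB, Finset.mem_sdiff.mpr ⟨hBsubC hjB', hjBnot⟩,
          ⟨k0, Finset.mem_inter.mpr ⟨hk0iA, hk0jB⟩⟩⟩
  · have hAdiff : (TA F A \ T1).Nonempty := by
      obtain ⟨x, hx, hx'⟩ := Finset.not_subset.mp hAsub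
      exact ⟨x, Finset.mem_sdiff.mpr ⟨hx, hx'⟩⟩
    by_cases hAint : (TA F A ∩ T1).Nonempty
    · exact liftA hAint hAdiff
    · have hiAnot : iA ∉ T1 := by
        intro h
        exact hAint ⟨iA, Finset.mem_inter.mpr ⟨hiA', h⟩⟩
      by_cases hBsub : TA F B ⊆ T1
      · exact ⟨jB, hBsub hjB', iA, Finset.mem_sdiff.mpr ⟨hAsubC hiA', hiAnot⟩,
          ⟨k0, Finset.mem_inter.mpr ⟨hk0jB, hk0iA⟩⟩⟩
      · have hBdiff : (TA F B \ T1).Nonempty := by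
          obtain ⟨x, hx, hx'⟩ := Finset.not_subset.mp hBsub
          exact ⟨x, Finset.mem_sdiff.mpr ⟨hx, hx'⟩⟩
        by_cases hBint : (TA F B ∩ T1).Nonempty
        · exact liftB hBint hBdiff
        · -- both TA F A and TA F B avoid T1 entirely ; pick element of T1
          obtain ⟨i', hi'⟩ := hne1
          obtain ⟨k, hk⟩ := hF i'
          have hi'C := hT1 hi'
          have hkAB : k ∈ A ∪ B := (mem_TA F).mp hi'C hk
          rcases Finset.mem_union.mp hkAB with hkA | hkB
          · obtain ⟨i2, hk2, hsub2⟩ := satA k hkA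
            have hi2not : i2 ∉ T1 := by
              intro h
              exact hAint ⟨i2, Finset.mem_inter.mpr ⟨(mem_TA F).mpr hsub2, h⟩⟩
            exact ⟨i', hi', i2,
              Finset.mem_sdiff.mpr ⟨hAsubC ((mem_TA F).mpr hsub2), hi2not⟩,
              ⟨k, Finset.mem_inter.mpr ⟨hk, hk2⟩⟩⟩
          · obtain ⟨i2, hk2, hsub2⟩ := satB k hkB
            have hi2not : i2 ∉ T1 := by
              intro h
              exact hBint ⟨i2, Finset.mem_inter.mpr ⟨(mem_TA F).mpr hsub2, h⟩⟩
            exact ⟨i', hi', i2,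
              Finset.mem_sdiff.mpr ⟨hBsubC ((mem_TA F).mpr hsub2), hi2not⟩,
              ⟨k, Finset.mem_inter.mpr ⟨hk, hk2⟩⟩⟩

end Stmt12

open Stmt12

/-- For a transversal polymatroidal ideal `I = P_{F_1} ⋯ P_{F_r}`: if `P_A` and `P_B` are
associated primes of `S/I` and `A ∩ B ≠ ∅`, then `P_{A ∪ B}` is an associated prime. -/
theorem stmt12 {K : Type} [Field K] {n r : ℕ}
    (F : Fin r → Finset (Fin n)) (hF : ∀ i, (F i).Nonempty)
    (A B : Finset (Fin n)) (hAB : (A ∩ B).Nonempty)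
    (hA : PF (K := K) A ∈ associatedPrimes (MvPolynomial (Fin n) K)
      (MvPolynomial (Fin n) K ⧸ ∏ i, PF (K := K) (F i)))
    (hB : PF (K := K) B ∈ associatedPrimes (MvPolynomial (Fin n) K)
      (MvPolynomial (Fin n) K ⧸ ∏ i, PF (K := K) (F i))) :
    PF (K := K) (A ∪ B) ∈ associatedPrimes (MvPolynomial (Fin n) K)
      (MvPolynomial (Fin n) K ⧸ ∏ i, PF (K := K) (F i)) := by
  obtain ⟨hprA, xA, hxA⟩ := isAssociatedPrime_iff.mp hA
  obtain ⟨fA, rfl⟩ := Ideal.Quotient.mk_surjective xA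
  obtain ⟨hprB, xB, hxB⟩ := isAssociatedPrime_iff.mp hB
  obtain ⟨fB, rfl⟩ := Ideal.Quotient.mk_surjective xB
  have hfA : ∀ g, g ∈ PF (K := K) A ↔ g * fA ∈ (∏ i, PF (K := K) (F i)) := by
    intro g
    rw [hxA]
    exact ann_mem_iff _ fA g
  have hfB : ∀ g, g ∈ PF (K := K) B ↔ g * fB ∈ (∏ i, PF (K := K) (F i)) := by
    intro g
    rw [hxB]
    exact ann_mem_iff _ fB g
  obtain ⟨bA, hPEQA⟩ := exists_monomial_witness F hF A hprA fA hfA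
  obtain ⟨bB, hPEQB⟩ := exists_monomial_witness F hF B hprB fB hfB
  have starA : Star F bA A := star_iff_forall F hF bA A hPEQA
  have starB : Star F bB B := star_iff_forall F hF bB B hPEQB
  have satA := forward_sat F A bA starA
  have satB := forward_sat F B bB starB
  have connA : ∀ T1 ⊆ TA F A, T1.Nonempty → (TA F A \ T1).Nonempty →
      ∃ i ∈ T1, ∃ j ∈ TA F A \ T1, (F i ∩ F j).Nonempty :=
    fun T1 hT1 h1 h2 => forward_conn F A bA starA T1 hT1 h1 h2 hF
  have connB : ∀ T1 ⊆ TA F B, T1.Nonempty → (TA F B \ T1).Nonempty →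
      ∃ i ∈ T1, ∃ j ∈ TA F B \ T1, (F i ∩ F j).Nonempty :=
    fun T1 hT1 h1 h2 => forward_conn F B bB starB T1 hT1 h1 h2 hF
  have satC : ∀ k ∈ A ∪ B, ∃ i, k ∈ F i ∧ F i ⊆ A ∪ B := by
    intro k hk
    rcases Finset.mem_union.mp hk with h | h
    · obtain ⟨i, h1, h2⟩ := satA k h
      exact ⟨i, h1, h2.trans Finset.subset_union_left⟩
    · obtain ⟨i, h1, h2⟩ := satB k h
      exact ⟨i, h1, h2.trans Finset.subset_union_right⟩
  have hTCne : (TA F (A ∪ B)).Nonempty := by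
    obtain ⟨k0, hk0⟩ := hAB
    obtain ⟨i, h1, h2⟩ := satA k0 (Finset.mem_inter.mp hk0).1
    exact ⟨i, (mem_TA F).mpr (h2.trans Finset.subset_union_left)⟩
  have connC := conn_union F hF A B hAB satA satB connA connB
  obtain ⟨bC, starC⟩ := backward F hF (A ∪ B) satC hTCne connC
  have hPEQC := star_to_PEQ (K := K) F hF bC (A ∪ B) starC
  refine isAssociatedPrime_iff.mpr ⟨PF_isPrime (A ∪ B),
    ⟨Ideal.Quotient.mk _ (monomial bC (1 : K)), ?_⟩⟩
  ext g
  rw [ann_mem_iff]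
  exact hPEQC g
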